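/- arXiv:2604.18569 — 2 statements merged into one kernel-verified Lean document; each statement's English description precedes it below -/
import Mathlib

section
/- (Per-round variance inequality from the proof of Theorem 6.) Under the oracle assumption with c₀c₁ ≥ 1, and with query probability π_t(x_t) = p_t that is F_{t−1}-measurable, the conditional variance σ_t² := E[(g_t − μ_y)² | F_{t−1}] satisfies, for every t: σ_t² ≤ c₀c₁ · σ*²_{t,(t)} + c₀ · ( Φ_t(x_t)/p_t − Φ_t(x_t)/p*_{1:t} ) almost surely, where σ*²_{t,(t)} is the conditional variance of g_t computed as if the fixed hindsight query probability p*_{1:t} ∈ [β, τ] had been used in place of p_t. -/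
/-
STATEMENT 11 (Per-round variance inequality from the proof of Theorem 6): Under the oracle
assumption with c₀c₁ ≥ 1, and with query probability π_t(x_t) = p_t that is
F_{t−1}-measurable, the conditional variance σ_t² := E[(g_t − μ_y)² | F_{t−1}] satisfies, for
every t: σ_t² ≤ c₀c₁ · σ*²_{t,(t)} + c₀ · ( Φ_t(x_t)/p_t − Φ_t(x_t)/p*_{1:t} ) almost surely,
where σ*²_{t,(t)} is the conditional variance of g_t computed as if the fixed hindsight query
probability p*_{1:t} ∈ [β, τ] had been used in place of p_t.
-/

open MeasureTheory ProbabilityTheory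

/-- The setting of sequential active mean estimation with an `ℱ (t-1)`-measurable query
probability `p t ∈ [β, τ]` and a variance oracle `Φ t` (representing `Φ_t(x_t)`) satisfying
`(1/c₁) Φ_t(x_t) ≤ E[(y_t − f_t(x_t))² | ℱ_{t−1}] ≤ c₀ Φ_t(x_t)` a.s. with `c₀ c₁ ≥ 1` and
`0 ≤ Φ_t(x_t) ≤ B`. -/
structure ActiveQuerySetup (Ω : Type*) [m0 : MeasurableSpace Ω] where
  μ : Measure Ω
  isProb : IsProbabilityMeasure μ
  ℱ : Filtration ℕ m0
  T : ℕ
  β : ℝ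
  τ : ℝ
  hβ : 0 < β
  hβτ : β ≤ τ
  hτ : τ ≤ 1
  x : ℕ → Ω → ℝ
  y : ℕ → Ω → ℝ
  f : ℕ → Ω → ℝ → ℝ
  p : ℕ → Ω → ℝ
  ξ : ℕ → Ω → ℝ
  Φ : ℕ → Ω → ℝ
  c₀ : ℝ
  c₁ : ℝ
  B : ℝ
  /-- `(x t, y t)` is `ℱ t`-measurable. -/
  hx : ∀ t, Measurable[ℱ t] (x t)
  hy : ∀ t, Measurable[ℱ t] (y t)
  hξmeas : ∀ t, Measurable[ℱ t] (ξ t)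
  /-- the prediction model `f t` is an `ℱ (t-1)`-measurable random function -/
  hf : ∀ t, @Measurable (Ω × ℝ) ℝ ((ℱ (t - 1)).prod (borel ℝ)) _ (Function.uncurry (f t))
  /-- the query probability `p t` is `ℱ (t-1)`-measurable -/
  hpmeas : ∀ t, Measurable[ℱ (t - 1)] (p t)
  /-- the query probability lies in `[β, τ]` -/
  hpmem : ∀ t ω, p t ω ∈ Set.Icc β τ
  /-- `(x t, y t)` is independent of `ℱ (t-1)` -/
  hindep : ∀ t,
    Indep (MeasurableSpace.comap (fun ω => (x t ω, y t ω)) inferInstance) (ℱ (t - 1)) μ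
  /-- the pairs `(x t, y t)` are identically distributed -/
  hident : ∀ s t,
    Measure.map (fun ω => (x s ω, y s ω)) μ = Measure.map (fun ω => (x t ω, y t ω)) μ
  /-- `ξ t` is `{0,1}`-valued -/
  hξ01 : ∀ t, ∀ᵐ ω ∂μ, ξ t ω = 0 ∨ ξ t ω = 1
  /-- conditionally on `ℱ (t-1)` and `(x t, y t)`, the indicator `ξ t` has conditional mean
  `p t`: it is `Bernoulli (p t)` given the past and `x t`, and conditionally independent of
  `y t` given the past and `x t`. -/
  hξcond : ∀ t,
    μ[ξ t | (ℱ (t - 1)) ⊔ MeasurableSpace.comap (fun ω => (x t ω, y t ω)) inferInstance]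
      =ᵐ[μ] p t
  /-- the oracle output at time `t` is `ℱ t`-measurable -/
  hΦmeas : ∀ t, Measurable[ℱ t] (Φ t)
  hc₀ : 0 < c₀
  hc₁ : 0 < c₁
  hc₀c₁ : 1 ≤ c₀ * c₁
  hB : 0 < B
  /-- the oracle output is nonnegative and bounded by `B` -/
  hΦ_nonneg : ∀ t ω, 0 ≤ Φ t ω
  hΦ_le : ∀ t ω, Φ t ω ≤ B
  /-- the oracle approximates the conditional variance of the model residual from below -/
  horacle_lo : ∀ t, ∀ᵐ ω ∂μ,
    (1 / c₁) * Φ t ω ≤ (μ[fun ω' => (y t ω' - f t ω' (x t ω')) ^ 2 | ℱ (t - 1)]) ω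
  /-- and from above -/
  horacle_hi : ∀ t, ∀ᵐ ω ∂μ,
    (μ[fun ω' => (y t ω' - f t ω' (x t ω')) ^ 2 | ℱ (t - 1)]) ω ≤ c₀ * Φ t ω
  /-- integrability of the labels -/
  hyint : ∀ t, Integrable (y t) μ
  /-- integrability of the update direction -/
  hgint : ∀ t, Integrable
    (fun ω => f t ω (x t ω) + (y t ω - f t ω (x t ω)) * ξ t ω / p t ω) μ
  /-- square-integrability conditions -/
  hf2int : ∀ t, Integrable (fun ω => (f t ω (x t ω)) ^ 2) μ
  hr2int : ∀ t, Integrable (fun ω => (y t ω - f t ω (x t ω)) ^ 2) μ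
  hfrint : ∀ t, Integrable (fun ω => f t ω (x t ω) * (y t ω - f t ω (x t ω))) μ
  hg2int : ∀ t, Integrable
    (fun ω => (f t ω (x t ω) + (y t ω - f t ω (x t ω)) * ξ t ω / p t ω) ^ 2) μ

variable {Ω : Type*} [MeasurableSpace Ω]

lemma key_ineq {A V Φ p q c₀ c₁ β : ℝ} (hβ : 0 < β) (hp : β ≤ p) (hp1 : p ≤ 1)
    (hq : β ≤ q) (hq1 : q ≤ 1) (hΦ : 0 ≤ Φ) (hlo : (1/c₁) * Φ ≤ V) (hhi : V ≤ c₀ * Φ)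
    (hAV : 0 ≤ A + V) (hc₀ : 0 < c₀) (hc₁ : 0 < c₁) (hcc : 1 ≤ c₀ * c₁) :
    A + (1/p) * V ≤ c₀ * c₁ * (A + (1/q) * V) + c₀ * (Φ / p - Φ / q) := by
  have hp0 : 0 < p := lt_of_lt_of_le hβ hp
  have hq0 : 0 < q := lt_of_lt_of_le hβ hq
  have hΦle : Φ ≤ c₁ * V := by
    have h := mul_le_mul_of_nonneg_left hlo hc₁.le
    have e : c₁ * (1 / c₁ * Φ) = Φ := by field_simp
    linarith [e ▸ h]
  have hu1 : 1 ≤ 1/p := one_le_one_div hp0 hp1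
  have hv1 : 1 ≤ 1/q := one_le_one_div hq0 hq1
  have hdp : Φ / p = Φ * (1/p) := by ring
  have hdq : Φ / q = Φ * (1/q) := by ring
  rw [hdp, hdq]
  have T1 : 0 ≤ (c₀ * c₁ - 1) * (A + V) := mul_nonneg (by linarith) hAV
  have T2 : 0 ≤ (c₀ * (c₁ * V - Φ)) * (1/q - 1) :=
    mul_nonneg (mul_nonneg hc₀.le (by linarith)) (by linarith)
  have T3 : 0 ≤ (c₀ * Φ - V) * (1/p - 1) := mul_nonneg (by linarith) (by linarith)
  nlinarith [T1, T2, T3]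

lemma abs_le_sq_add_one (x : ℝ) : ‖x‖ ≤ x ^ 2 + 1 := by
  rw [Real.norm_eq_abs]
  nlinarith [sq_nonneg (|x| - 1), sq_abs x, abs_nonneg x]

lemma integrable_of_sq {Ω : Type*} [MeasurableSpace Ω] {μ : Measure Ω} [IsFiniteMeasure μ]
    {f : Ω → ℝ} (hm : AEStronglyMeasurable f μ)
    (h : Integrable (fun ω => f ω ^ 2) μ) : Integrable f μ := by
  refine (h.add (integrable_const 1)).mono' hm ?_
  filter_upwards with ω
  exact abs_le_sq_add_one (f ω)



/-- the update direction `g_t = f_t(x_t) + (y_t − f_t(x_t)) ξ_t / p_t` -/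
noncomputable def g (S : ActiveQuerySetup Ω) (t : ℕ) (ω : Ω) : ℝ :=
  S.f t ω (S.x t ω) + (S.y t ω - S.f t ω (S.x t ω)) * S.ξ t ω / S.p t ω

/-- the common mean `μ_y = E[y_t]` of the labels -/
noncomputable def μy (S : ActiveQuerySetup Ω) : ℝ := ∫ ω, S.y 1 ω ∂S.μ

/-- the conditional variance `σ_t² = E[(g_t − μ_y)² | ℱ_{t−1}]` -/
noncomputable def condVar (S : ActiveQuerySetup Ω) (t : ℕ) : Ω → ℝ :=
  S.μ[fun ω => (g S t ω - μy S) ^ 2 | S.ℱ (t - 1)]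

/-- `σ*²_{s,(t)}`: the conditional variance of `g_s` computed as if the fixed hindsight query
probability `p*_{1:t}` had been used in place of `p_s`, i.e.
`E[f_s(x_s)² | ℱ_{s−1}] + (1/p*_{1:t}) E[(y_s − f_s(x_s))² | ℱ_{s−1}]
 + 2 E[f_s(x_s)(y_s − f_s(x_s)) | ℱ_{s−1}] − μ_y²`. -/
noncomputable def sigmaStarSq (S : ActiveQuerySetup Ω) (pstar : ℕ → Ω → ℝ) (s t : ℕ)
    (ω : Ω) : ℝ :=
  (S.μ[fun ω' => (S.f s ω' (S.x s ω')) ^ 2 | S.ℱ (s - 1)]) ω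
    + (1 / pstar t ω) * (S.μ[fun ω' => (S.y s ω' - S.f s ω' (S.x s ω')) ^ 2 | S.ℱ (s - 1)]) ω
    + 2 * (S.μ[fun ω' => S.f s ω' (S.x s ω') * (S.y s ω' - S.f s ω' (S.x s ω'))
        | S.ℱ (s - 1)]) ω
    - (μy S) ^ 2

/-- `p*_{1:t} = argmin_{p ∈ [β,τ]} Σ_{s=1}^t Φ_s(x_s)/p`: the best fixed query probability in
hindsight over the first `t` rounds. -/
def IsHindsightBest (S : ActiveQuerySetup Ω) (pstar : ℕ → Ω → ℝ) : Prop :=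
  ∀ t ω, pstar t ω ∈ Set.Icc S.β S.τ ∧
    ∀ q ∈ Set.Icc S.β S.τ,
      (∑ s ∈ Finset.Icc 1 t, S.Φ s ω / pstar t ω) ≤ ∑ s ∈ Finset.Icc 1 t, S.Φ s ω / q

/-- **Per-round variance inequality (from the proof of Theorem 6).** Under the oracle
assumption with `c₀ c₁ ≥ 1` and `ℱ_{t−1}`-measurable query probabilities `p_t ∈ [β,τ]`, for
every round `t`:
`σ_t² ≤ c₀c₁ σ*²_{t,(t)} + c₀ (Φ_t(x_t)/p_t − Φ_t(x_t)/p*_{1:t})` a.s. -/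
theorem per_round_variance_bound (S : ActiveQuerySetup Ω)
    (pstar : ℕ → Ω → ℝ) (hpstar : IsHindsightBest S pstar) :
    ∀ t, 1 ≤ t → ∀ᵐ ω ∂S.μ,
      condVar S t ω ≤
        S.c₀ * S.c₁ * sigmaStarSq S pstar t t ω
          + S.c₀ * (S.Φ t ω / S.p t ω - S.Φ t ω / pstar t ω) := by
  intro t ht
  classical
  haveI : IsProbabilityMeasure S.μ := S.isProb
  -- abbreviations
  have hm : S.ℱ (t - 1) ≤ _ := S.ℱ.le (t - 1)
  have hxym0 : Measurable (fun ω => (S.x t ω, S.y t ω)) :=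
    ((S.hx t).mono (S.ℱ.le t) le_rfl).prodMk ((S.hy t).mono (S.ℱ.le t) le_rfl)
  have hmxy : MeasurableSpace.comap (fun ω => (S.x t ω, S.y t ω)) inferInstance ≤ _ :=
    measurable_iff_comap_le.mp hxym0
  have hsup : S.ℱ (t - 1) ⊔ MeasurableSpace.comap (fun ω => (S.x t ω, S.y t ω)) inferInstance
      ≤ _ := sup_le hm hmxy
  -- measurability
  have hxy_mxy : @Measurable Ω (ℝ × ℝ)
      (MeasurableSpace.comap (fun ω => (S.x t ω, S.y t ω)) inferInstance) _
      (fun ω => (S.x t ω, S.y t ω)) := measurable_iff_comap_le.mpr le_rfl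
  have hx_sup : @Measurable Ω ℝ (S.ℱ (t - 1) ⊔
      MeasurableSpace.comap (fun ω => (S.x t ω, S.y t ω)) inferInstance) _ (S.x t) :=
    (measurable_fst.comp hxy_mxy).mono le_sup_right le_rfl
  have hy_sup : @Measurable Ω ℝ (S.ℱ (t - 1) ⊔
      MeasurableSpace.comap (fun ω => (S.x t ω, S.y t ω)) inferInstance) _ (S.y t) :=
    (measurable_snd.comp hxy_mxy).mono le_sup_right le_rfl
  have hF_sup : @Measurable Ω ℝ (S.ℱ (t - 1) ⊔
      MeasurableSpace.comap (fun ω => (S.x t ω, S.y t ω)) inferInstance) _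
      (fun ω => S.f t ω (S.x t ω)) := by
    have h1 : @Measurable Ω (Ω × ℝ) (S.ℱ (t - 1) ⊔
        MeasurableSpace.comap (fun ω => (S.x t ω, S.y t ω)) inferInstance)
        ((S.ℱ (t - 1)).prod (borel ℝ)) (fun ω => (ω, S.x t ω)) :=
      @Measurable.prodMk Ω _ Ω ℝ (S.ℱ (t - 1)) (borel ℝ) id (S.x t)
        (measurable_id'' le_sup_left) hx_sup
    exact (S.hf t).comp h1
  have hR_sup : @Measurable Ω ℝ (S.ℱ (t - 1) ⊔
      MeasurableSpace.comap (fun ω => (S.x t ω, S.y t ω)) inferInstance) _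
      (fun ω => S.y t ω - S.f t ω (S.x t ω)) := hy_sup.sub hF_sup
  have hF_m0 : Measurable (fun ω => S.f t ω (S.x t ω)) := hF_sup.mono hsup le_rfl
  have hR_m0 : Measurable (fun ω => S.y t ω - S.f t ω (S.x t ω)) := hR_sup.mono hsup le_rfl
  have hP_m : Measurable[S.ℱ (t - 1)] (S.p t) := S.hpmeas t
  have hP_m0 : Measurable (S.p t) := hP_m.mono hm le_rfl
  have hΞ_m0 : Measurable (S.ξ t) := (S.hξmeas t).mono (S.ℱ.le t) le_rfl
  -- basic bounds
  have hβp : ∀ ω, 0 < S.p t ω := fun ω => lt_of_lt_of_le S.hβ (S.hpmem t ω).1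
  have hp1 : ∀ ω, S.p t ω ≤ 1 := fun ω => le_trans (S.hpmem t ω).2 S.hτ
  have hΞbd : ∀ᵐ ω ∂S.μ, ‖S.ξ t ω‖ ≤ 1 := by
    filter_upwards [S.hξ01 t] with ω h
    rcases h with h | h <;> simp [h]
  -- integrability
  have hΞint : Integrable (S.ξ t) S.μ :=
    (integrable_const 1).mono' hΞ_m0.aestronglyMeasurable hΞbd
  have hFint : Integrable (fun ω => S.f t ω (S.x t ω)) S.μ :=
    integrable_of_sq hF_m0.aestronglyMeasurable (S.hf2int t)
  have hRint : Integrable (fun ω => S.y t ω - S.f t ω (S.x t ω)) S.μ :=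
    integrable_of_sq hR_m0.aestronglyMeasurable (S.hr2int t)
  -- the pull-out lemma for the Bernoulli indicator
  have pull : ∀ h : Ω → ℝ,
      StronglyMeasurable[S.ℱ (t - 1) ⊔
        MeasurableSpace.comap (fun ω => (S.x t ω, S.y t ω)) inferInstance] h →
      Integrable h S.μ → Integrable (fun ω => h ω * S.ξ t ω) S.μ →
      S.μ[fun ω => h ω * S.ξ t ω | S.ℱ (t - 1)]
        =ᵐ[S.μ] fun ω => S.p t ω * (S.μ[h | S.ℱ (t - 1)]) ω := by
    intro h hh hhint hhξint
    have hPh_int : Integrable (fun ω => S.p t ω * h ω) S.μ := by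
      refine hhint.abs.mono' ((hP_m0.mul (hh.measurable.mono hsup le_rfl)).aestronglyMeasurable)
        ?_
      filter_upwards with ω
      have h1 : |S.p t ω| ≤ 1 := by
        rw [abs_of_pos (hβp ω)]; exact hp1 ω
      calc ‖S.p t ω * h ω‖ = |S.p t ω| * |h ω| := abs_mul _ _
        _ ≤ 1 * |h ω| := by gcongr
        _ = |h ω| := one_mul _
    have t1 : S.μ[fun ω => h ω * S.ξ t ω | S.ℱ (t - 1) ⊔
        MeasurableSpace.comap (fun ω => (S.x t ω, S.y t ω)) inferInstance]
        =ᵐ[S.μ] fun ω => S.p t ω * h ω := by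
      have := condExp_mul_of_stronglyMeasurable_left (μ := S.μ) hh hhξint hΞint
      refine this.trans ?_
      filter_upwards [S.hξcond t] with ω hω
      simp only [Pi.mul_apply]
      rw [hω, mul_comm]
    calc S.μ[fun ω => h ω * S.ξ t ω | S.ℱ (t - 1)]
        =ᵐ[S.μ] S.μ[S.μ[fun ω => h ω * S.ξ t ω | S.ℱ (t - 1) ⊔
          MeasurableSpace.comap (fun ω => (S.x t ω, S.y t ω)) inferInstance] | S.ℱ (t - 1)] :=
          (condExp_condExp_of_le le_sup_left hsup).symm
      _ =ᵐ[S.μ] S.μ[fun ω => S.p t ω * h ω | S.ℱ (t - 1)] := condExp_congr_ae t1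
      _ =ᵐ[S.μ] fun ω => S.p t ω * (S.μ[h | S.ℱ (t - 1)]) ω :=
          condExp_mul_of_stronglyMeasurable_left hP_m.stronglyMeasurable hPh_int hhint
  -- more integrability
  have hRΞint : Integrable (fun ω => (S.y t ω - S.f t ω (S.x t ω)) * S.ξ t ω) S.μ := by
    refine hRint.abs.mono' ((hR_m0.mul hΞ_m0).aestronglyMeasurable) ?_
    filter_upwards [hΞbd] with ω hb
    calc ‖(S.y t ω - S.f t ω (S.x t ω)) * S.ξ t ω‖
        = ‖S.y t ω - S.f t ω (S.x t ω)‖ * ‖S.ξ t ω‖ := norm_mul _ _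
      _ ≤ ‖S.y t ω - S.f t ω (S.x t ω)‖ * 1 := by gcongr
      _ = |S.y t ω - S.f t ω (S.x t ω)| := by rw [mul_one]; rfl
  have hFRΞint : Integrable
      (fun ω => S.f t ω (S.x t ω) * (S.y t ω - S.f t ω (S.x t ω)) * S.ξ t ω) S.μ := by
    refine (S.hfrint t).abs.mono' (((hF_m0.mul hR_m0).mul hΞ_m0).aestronglyMeasurable) ?_
    filter_upwards [hΞbd] with ω hb
    calc ‖S.f t ω (S.x t ω) * (S.y t ω - S.f t ω (S.x t ω)) * S.ξ t ω‖
        = ‖S.f t ω (S.x t ω) * (S.y t ω - S.f t ω (S.x t ω))‖ * ‖S.ξ t ω‖ := norm_mul _ _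
      _ ≤ ‖S.f t ω (S.x t ω) * (S.y t ω - S.f t ω (S.x t ω))‖ * 1 := by gcongr
      _ = |S.f t ω (S.x t ω) * (S.y t ω - S.f t ω (S.x t ω))| := by rw [mul_one]; rfl
  have hR2Ξint : Integrable
      (fun ω => (S.y t ω - S.f t ω (S.x t ω)) ^ 2 * S.ξ t ω) S.μ := by
    refine (S.hr2int t).abs.mono' (((hR_m0.pow_const 2).mul hΞ_m0).aestronglyMeasurable) ?_
    filter_upwards [hΞbd] with ω hb
    calc ‖(S.y t ω - S.f t ω (S.x t ω)) ^ 2 * S.ξ t ω‖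
        = ‖(S.y t ω - S.f t ω (S.x t ω)) ^ 2‖ * ‖S.ξ t ω‖ := norm_mul _ _
      _ ≤ ‖(S.y t ω - S.f t ω (S.x t ω)) ^ 2‖ * 1 := by gcongr
      _ = |(S.y t ω - S.f t ω (S.x t ω)) ^ 2| := by rw [mul_one]; rfl
  -- E[y_t | F_{t-1}] is the constant μy
  have hy_mxy : @Measurable Ω ℝ
      (MeasurableSpace.comap (fun ω => (S.x t ω, S.y t ω)) inferInstance) _ (S.y t) :=
    measurable_snd.comp hxy_mxy
  have hmean : ∫ ω, S.y t ω ∂S.μ = μy S := by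
    have hxy1m0 : Measurable (fun ω => (S.x 1 ω, S.y 1 ω)) :=
      ((S.hx 1).mono (S.ℱ.le 1) le_rfl).prodMk ((S.hy 1).mono (S.ℱ.le 1) le_rfl)
    have e1 : ∫ ω, S.y t ω ∂S.μ
        = ∫ z : ℝ × ℝ, z.2 ∂(Measure.map (fun ω => (S.x t ω, S.y t ω)) S.μ) := by
      rw [integral_map hxym0.aemeasurable measurable_snd.aestronglyMeasurable]
    have e2 : ∫ ω, S.y 1 ω ∂S.μ
        = ∫ z : ℝ × ℝ, z.2 ∂(Measure.map (fun ω => (S.x 1 ω, S.y 1 ω)) S.μ) := by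
      rw [integral_map hxy1m0.aemeasurable measurable_snd.aestronglyMeasurable]
    rw [μy, e1, e2, S.hident t 1]
  have hy_cond : S.μ[S.y t | S.ℱ (t - 1)] =ᵐ[S.μ] fun _ => μy S := by
    refine (condExp_indep_eq hmxy hm hy_mxy.stronglyMeasurable (S.hindep t)).trans ?_
    rw [hmean]
  -- E[g | F_{t-1}] = μy
  have hg_eq : g S t = fun ω => S.f t ω (S.x t ω)
      + (1 / S.p t ω) * ((S.y t ω - S.f t ω (S.x t ω)) * S.ξ t ω) := by
    funext ω
    simp only [g]
    field_simp
  have hg1int' : Integrable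
      (fun ω => (1 / S.p t ω) * ((S.y t ω - S.f t ω (S.x t ω)) * S.ξ t ω)) S.μ := by
    refine (hRint.abs.const_mul (1 / S.β)).mono'
      (((measurable_const.div hP_m0).mul (hR_m0.mul hΞ_m0)).aestronglyMeasurable) ?_
    filter_upwards [hΞbd] with ω hb
    have h1 : |1 / S.p t ω| ≤ 1 / S.β := by
      rw [abs_of_pos (one_div_pos.mpr (hβp ω))]
      exact one_div_le_one_div_of_le S.hβ (S.hpmem t ω).1
    calc ‖(1 / S.p t ω) * ((S.y t ω - S.f t ω (S.x t ω)) * S.ξ t ω)‖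
        = |1 / S.p t ω| * (|S.y t ω - S.f t ω (S.x t ω)| * |S.ξ t ω|) := by
          rw [norm_mul, norm_mul]; rfl
      _ ≤ (1 / S.β) * (|S.y t ω - S.f t ω (S.x t ω)| * 1) := by
          have h0 : (0:ℝ) ≤ 1 / S.β := le_of_lt (one_div_pos.mpr S.hβ)
          have hb' : |S.ξ t ω| ≤ 1 := by rwa [Real.norm_eq_abs] at hb
          exact mul_le_mul h1 (mul_le_mul_of_nonneg_left hb' (abs_nonneg _))
            (by positivity) h0
      _ = 1 / S.β * |S.y t ω - S.f t ω (S.x t ω)| := by ring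
  have hRΞ_cond := pull (fun ω => S.y t ω - S.f t ω (S.x t ω))
      hR_sup.stronglyMeasurable hRint hRΞint
  have hg_cond : S.μ[g S t | S.ℱ (t - 1)] =ᵐ[S.μ] fun _ => μy S := by
    rw [hg_eq]
    calc S.μ[fun ω => S.f t ω (S.x t ω)
          + (1 / S.p t ω) * ((S.y t ω - S.f t ω (S.x t ω)) * S.ξ t ω) | S.ℱ (t - 1)]
        =ᵐ[S.μ] S.μ[fun ω => S.f t ω (S.x t ω) | S.ℱ (t - 1)]
          + S.μ[fun ω => (1 / S.p t ω) * ((S.y t ω - S.f t ω (S.x t ω)) * S.ξ t ω)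
            | S.ℱ (t - 1)] := condExp_add hFint hg1int' _
      _ =ᵐ[S.μ] fun ω => (S.μ[fun ω' => S.f t ω' (S.x t ω') | S.ℱ (t - 1)]) ω
          + (S.μ[fun ω' => S.y t ω' - S.f t ω' (S.x t ω') | S.ℱ (t - 1)]) ω := by
          have h2 : S.μ[fun ω => (1 / S.p t ω)
              * ((S.y t ω - S.f t ω (S.x t ω)) * S.ξ t ω) | S.ℱ (t - 1)]
              =ᵐ[S.μ] (fun ω => 1 / S.p t ω)
                * S.μ[fun ω => (S.y t ω - S.f t ω (S.x t ω)) * S.ξ t ω | S.ℱ (t - 1)] :=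
            condExp_mul_of_stronglyMeasurable_left
              ((measurable_const.div hP_m).stronglyMeasurable) hg1int' hRΞint
          filter_upwards [h2, hRΞ_cond] with ω h2ω h3ω
          simp only [Pi.add_apply, Pi.mul_apply] at h2ω ⊢
          rw [h2ω, h3ω]
          have hp0 : S.p t ω ≠ 0 := (hβp ω).ne'
          field_simp
      _ =ᵐ[S.μ] S.μ[fun ω => S.f t ω (S.x t ω)
            + (S.y t ω - S.f t ω (S.x t ω)) | S.ℱ (t - 1)] := (condExp_add hFint hRint _).symm
      _ =ᵐ[S.μ] S.μ[S.y t | S.ℱ (t - 1)] := by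
          refine condExp_congr_ae (Filter.Eventually.of_forall fun ω => ?_)
          ring
      _ =ᵐ[S.μ] fun _ => μy S := hy_cond
  -- decomposition of g² (using ξ² = ξ)
  have hg2_ae : (fun ω => (g S t ω) ^ 2) =ᵐ[S.μ] fun ω => (S.f t ω (S.x t ω)) ^ 2
      + (2 / S.p t ω) * (S.f t ω (S.x t ω) * (S.y t ω - S.f t ω (S.x t ω)) * S.ξ t ω)
      + (1 / (S.p t ω) ^ 2) * ((S.y t ω - S.f t ω (S.x t ω)) ^ 2 * S.ξ t ω) := by
    filter_upwards [S.hξ01 t] with ω hξ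
    have hξsq : S.ξ t ω ^ 2 = S.ξ t ω := by rcases hξ with h | h <;> simp [h]
    have hp0 : S.p t ω ≠ 0 := (hβp ω).ne'
    have e : (S.f t ω (S.x t ω) + (S.y t ω - S.f t ω (S.x t ω)) * S.ξ t ω / S.p t ω) ^ 2
        = (S.f t ω (S.x t ω)) ^ 2
          + (2 / S.p t ω) * (S.f t ω (S.x t ω) * (S.y t ω - S.f t ω (S.x t ω)) * S.ξ t ω)
          + (1 / (S.p t ω) ^ 2) * ((S.y t ω - S.f t ω (S.x t ω)) ^ 2 * S.ξ t ω ^ 2) := by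
      field_simp
      ring
    simp only [g]
    rw [e, hξsq]
  have hmid_int : Integrable (fun ω => (2 / S.p t ω)
      * (S.f t ω (S.x t ω) * (S.y t ω - S.f t ω (S.x t ω)) * S.ξ t ω)) S.μ := by
    refine ((S.hfrint t).abs.const_mul (2 / S.β)).mono'
      (((measurable_const.div hP_m0).mul
        ((hF_m0.mul hR_m0).mul hΞ_m0)).aestronglyMeasurable) ?_
    filter_upwards [hΞbd] with ω hb
    have hb' : |S.ξ t ω| ≤ 1 := by rwa [Real.norm_eq_abs] at hb
    have h1 : |2 / S.p t ω| ≤ 2 / S.β := by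
      rw [abs_of_pos (by exact div_pos two_pos (hβp ω))]
      exact div_le_div_of_nonneg_left two_pos.le S.hβ (S.hpmem t ω).1
    have h0 : (0:ℝ) ≤ 2 / S.β := le_of_lt (div_pos two_pos S.hβ)
    calc ‖(2 / S.p t ω) * (S.f t ω (S.x t ω) * (S.y t ω - S.f t ω (S.x t ω)) * S.ξ t ω)‖
        = |2 / S.p t ω| * (|S.f t ω (S.x t ω) * (S.y t ω - S.f t ω (S.x t ω))| * |S.ξ t ω|)
          := by rw [norm_mul, norm_mul]; rfl
      _ ≤ (2 / S.β) * (|S.f t ω (S.x t ω) * (S.y t ω - S.f t ω (S.x t ω))| * 1) :=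
          mul_le_mul h1 (mul_le_mul_of_nonneg_left hb' (abs_nonneg _)) (by positivity) h0
      _ = 2 / S.β * |S.f t ω (S.x t ω) * (S.y t ω - S.f t ω (S.x t ω))| := by ring
  have hlast_int : Integrable (fun ω => (1 / (S.p t ω) ^ 2)
      * ((S.y t ω - S.f t ω (S.x t ω)) ^ 2 * S.ξ t ω)) S.μ := by
    refine ((S.hr2int t).abs.const_mul (1 / S.β ^ 2)).mono'
      (((measurable_const.div (hP_m0.pow_const 2)).mul
        ((hR_m0.pow_const 2).mul hΞ_m0)).aestronglyMeasurable) ?_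
    filter_upwards [hΞbd] with ω hb
    have hb' : |S.ξ t ω| ≤ 1 := by rwa [Real.norm_eq_abs] at hb
    have hpsq : (0:ℝ) < (S.p t ω) ^ 2 := pow_pos (hβp ω) 2
    have h1 : |1 / (S.p t ω) ^ 2| ≤ 1 / S.β ^ 2 := by
      rw [abs_of_pos (one_div_pos.mpr hpsq)]
      refine one_div_le_one_div_of_le (pow_pos S.hβ 2) ?_
      exact pow_le_pow_left₀ S.hβ.le (S.hpmem t ω).1 2
    have h0 : (0:ℝ) ≤ 1 / S.β ^ 2 := by positivity
    calc ‖(1 / (S.p t ω) ^ 2) * ((S.y t ω - S.f t ω (S.x t ω)) ^ 2 * S.ξ t ω)‖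
        = |1 / (S.p t ω) ^ 2| * (|(S.y t ω - S.f t ω (S.x t ω)) ^ 2| * |S.ξ t ω|) := by
          rw [norm_mul, norm_mul]; rfl
      _ ≤ (1 / S.β ^ 2) * (|(S.y t ω - S.f t ω (S.x t ω)) ^ 2| * 1) :=
          mul_le_mul h1 (mul_le_mul_of_nonneg_left hb' (abs_nonneg _)) (by positivity) h0
      _ = 1 / S.β ^ 2 * |(S.y t ω - S.f t ω (S.x t ω)) ^ 2| := by ring
  -- conditional second moment of g
  have hg2_cond : S.μ[fun ω => (g S t ω) ^ 2 | S.ℱ (t - 1)] =ᵐ[S.μ] fun ω =>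
      (S.μ[fun ω' => (S.f t ω' (S.x t ω')) ^ 2 | S.ℱ (t - 1)]) ω
      + (1 / S.p t ω)
        * (S.μ[fun ω' => (S.y t ω' - S.f t ω' (S.x t ω')) ^ 2 | S.ℱ (t - 1)]) ω
      + 2 * (S.μ[fun ω' => S.f t ω' (S.x t ω') * (S.y t ω' - S.f t ω' (S.x t ω'))
          | S.ℱ (t - 1)]) ω := by
    have c1 := condExp_add (μ := S.μ) (m := S.ℱ (t - 1)) ((S.hf2int t).add hmid_int) hlast_int
    have c2 := condExp_add (μ := S.μ) (m := S.ℱ (t - 1)) (S.hf2int t) hmid_int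
    have cmid : S.μ[fun ω => (2 / S.p t ω)
        * (S.f t ω (S.x t ω) * (S.y t ω - S.f t ω (S.x t ω)) * S.ξ t ω) | S.ℱ (t - 1)]
        =ᵐ[S.μ] (fun ω => 2 / S.p t ω) * S.μ[fun ω =>
          S.f t ω (S.x t ω) * (S.y t ω - S.f t ω (S.x t ω)) * S.ξ t ω | S.ℱ (t - 1)] :=
      condExp_mul_of_stronglyMeasurable_left ((measurable_const.div hP_m).stronglyMeasurable)
        hmid_int hFRΞint
    have clast : S.μ[fun ω => (1 / (S.p t ω) ^ 2)
        * ((S.y t ω - S.f t ω (S.x t ω)) ^ 2 * S.ξ t ω) | S.ℱ (t - 1)]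
        =ᵐ[S.μ] (fun ω => 1 / (S.p t ω) ^ 2) * S.μ[fun ω =>
          (S.y t ω - S.f t ω (S.x t ω)) ^ 2 * S.ξ t ω | S.ℱ (t - 1)] :=
      condExp_mul_of_stronglyMeasurable_left
        ((measurable_const.div (hP_m.pow_const 2)).stronglyMeasurable) hlast_int hR2Ξint
    have pmid := pull (fun ω => S.f t ω (S.x t ω) * (S.y t ω - S.f t ω (S.x t ω)))
      (hF_sup.mul hR_sup).stronglyMeasurable (S.hfrint t) hFRΞint
    have plast := pull (fun ω => (S.y t ω - S.f t ω (S.x t ω)) ^ 2)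
      (hR_sup.pow_const 2).stronglyMeasurable (S.hr2int t) hR2Ξint
    refine (condExp_congr_ae hg2_ae).trans ?_
    refine c1.trans ?_
    filter_upwards [c2, cmid, clast, pmid, plast] with ω h2 hmidω hlastω hpmidω hplastω
    simp only [Pi.add_apply, Pi.mul_apply] at h2 hmidω hlastω ⊢
    rw [h2, hmidω, hlastω, hpmidω, hplastω]
    have hp0 : S.p t ω ≠ 0 := (hβp ω).ne'
    field_simp
    ring
  -- conditional variance identity
  have hgsub : (fun ω => (g S t ω - μy S) ^ 2)
      = fun ω => (g S t ω) ^ 2 - (2 * μy S) * g S t ω + (μy S) ^ 2 := by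
    funext ω; ring
  have hg2int' : Integrable (fun ω => (g S t ω) ^ 2) S.μ := S.hg2int t
  have hgint' : Integrable (g S t) S.μ := S.hgint t
  have hcv0 : condVar S t =ᵐ[S.μ] fun ω =>
      (S.μ[fun ω' => (g S t ω') ^ 2 | S.ℱ (t - 1)]) ω - (μy S) ^ 2 := by
    have c1 := condExp_add (μ := S.μ) (m := S.ℱ (t - 1))
      (hg2int'.sub (hgint'.const_mul (2 * μy S))) (integrable_const ((μy S) ^ 2))
    have c2 := condExp_sub (μ := S.μ) (m := S.ℱ (t - 1)) hg2int'
      (hgint'.const_mul (2 * μy S))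
    have c3 := condExp_smul (μ := S.μ) (m := S.ℱ (t - 1)) (2 * μy S) (g S t)
    have c4 := condExp_const (μ := S.μ) hm ((μy S) ^ 2)
    have : condVar S t = S.μ[fun ω => (g S t ω) ^ 2 - (2 * μy S) * g S t ω + (μy S) ^ 2
        | S.ℱ (t - 1)] := by
      rw [_root_.condVar, hgsub]
    rw [this]
    refine c1.trans ?_
    filter_upwards [c2, c3, hg_cond] with ω h2 h3 h5
    simp only [Pi.add_apply, Pi.sub_apply, Pi.smul_apply, smul_eq_mul] at h2 h3 ⊢
    have h3' : (S.μ[fun x => 2 * μy S * g S t x | S.ℱ (t - 1)]) ω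
        = 2 * μy S * (S.μ[g S t | S.ℱ (t - 1)]) ω := h3
    have h4' := congrFun c4 ω
    rw [h2, h3', h5, h4']
    ring
  have hcv : condVar S t =ᵐ[S.μ] fun ω =>
      (S.μ[fun ω' => (S.f t ω' (S.x t ω')) ^ 2 | S.ℱ (t - 1)]) ω
      + (1 / S.p t ω)
        * (S.μ[fun ω' => (S.y t ω' - S.f t ω' (S.x t ω')) ^ 2 | S.ℱ (t - 1)]) ω
      + 2 * (S.μ[fun ω' => S.f t ω' (S.x t ω') * (S.y t ω' - S.f t ω' (S.x t ω'))
          | S.ℱ (t - 1)]) ω - (μy S) ^ 2 := by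
    filter_upwards [hcv0, hg2_cond] with ω h1 h2
    rw [h1, h2]
  -- nonnegativity of the hindsight variance pieces: E[y²|F] ≥ μy²
  have hyt2int : Integrable (fun ω => (S.y t ω) ^ 2) S.μ := by
    have e : (fun ω => (S.y t ω) ^ 2) = fun ω => (S.f t ω (S.x t ω)) ^ 2
        + 2 * (S.f t ω (S.x t ω) * (S.y t ω - S.f t ω (S.x t ω)))
        + (S.y t ω - S.f t ω (S.x t ω)) ^ 2 := by
      funext ω; ring
    rw [e]
    exact ((S.hf2int t).add ((S.hfrint t).const_mul 2)).add (S.hr2int t)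
  have hy2_cond : S.μ[fun ω => (S.y t ω) ^ 2 | S.ℱ (t - 1)]
      =ᵐ[S.μ] fun _ => ∫ ω, (S.y t ω) ^ 2 ∂S.μ :=
    condExp_indep_eq hmxy hm (hy_mxy.pow_const 2).stronglyMeasurable (S.hindep t)
  have hsplit : S.μ[fun ω => (S.y t ω) ^ 2 | S.ℱ (t - 1)] =ᵐ[S.μ] fun ω =>
      (S.μ[fun ω' => (S.f t ω' (S.x t ω')) ^ 2 | S.ℱ (t - 1)]) ω
      + 2 * (S.μ[fun ω' => S.f t ω' (S.x t ω') * (S.y t ω' - S.f t ω' (S.x t ω'))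
          | S.ℱ (t - 1)]) ω
      + (S.μ[fun ω' => (S.y t ω' - S.f t ω' (S.x t ω')) ^ 2 | S.ℱ (t - 1)]) ω := by
    have e : (fun ω => (S.y t ω) ^ 2) =ᵐ[S.μ] fun ω => (S.f t ω (S.x t ω)) ^ 2
        + 2 * (S.f t ω (S.x t ω) * (S.y t ω - S.f t ω (S.x t ω)))
        + (S.y t ω - S.f t ω (S.x t ω)) ^ 2 :=
      Filter.Eventually.of_forall fun ω => by ring
    have c1 := condExp_add (μ := S.μ) (m := S.ℱ (t - 1))
      ((S.hf2int t).add ((S.hfrint t).const_mul 2)) (S.hr2int t)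
    have c2 := condExp_add (μ := S.μ) (m := S.ℱ (t - 1)) (S.hf2int t)
      ((S.hfrint t).const_mul 2)
    have c3 := condExp_smul (μ := S.μ) (m := S.ℱ (t - 1)) (2 : ℝ)
      (fun ω => S.f t ω (S.x t ω) * (S.y t ω - S.f t ω (S.x t ω)))
    refine (condExp_congr_ae e).trans (c1.trans ?_)
    filter_upwards [c2, c3] with ω h2 h3
    simp only [Pi.add_apply, Pi.smul_apply, smul_eq_mul] at h2 h3 ⊢
    have h3' : (S.μ[fun x => 2 * (S.f t x (S.x t x) * (S.y t x - S.f t x (S.x t x)))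
        | S.ℱ (t - 1)]) ω = 2 * (S.μ[fun ω' => S.f t ω' (S.x t ω')
          * (S.y t ω' - S.f t ω' (S.x t ω')) | S.ℱ (t - 1)]) ω := h3
    rw [h2, h3']
  have hvar : (μy S) ^ 2 ≤ ∫ ω, (S.y t ω) ^ 2 ∂S.μ := by
    have h0 : 0 ≤ ∫ ω, (S.y t ω - μy S) ^ 2 ∂S.μ :=
      integral_nonneg fun ω => sq_nonneg _
    have e2 : (fun ω => (S.y t ω - μy S) ^ 2) = fun ω => (S.y t ω) ^ 2
        - (2 * μy S) * S.y t ω + (μy S) ^ 2 := by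
      funext ω; ring
    rw [e2] at h0
    have hint2 : Integrable (fun ω => 2 * μy S * S.y t ω) S.μ := (S.hyint t).const_mul _
    have hint1 : Integrable (fun ω => S.y t ω ^ 2 - 2 * μy S * S.y t ω) S.μ :=
      hyt2int.sub hint2
    rw [integral_add hint1 (integrable_const _),
      integral_sub hyt2int hint2, integral_const_mul, hmean,
      integral_const] at h0
    simp only [measure_univ, ENNReal.toReal_one, smul_eq_mul, one_mul, probReal_univ] at h0
    nlinarith [h0]
  have hAV_ae : ∀ᵐ ω ∂S.μ, 0 ≤
      ((S.μ[fun ω' => (S.f t ω' (S.x t ω')) ^ 2 | S.ℱ (t - 1)]) ω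
        + 2 * (S.μ[fun ω' => S.f t ω' (S.x t ω') * (S.y t ω' - S.f t ω' (S.x t ω'))
            | S.ℱ (t - 1)]) ω - (μy S) ^ 2)
      + (S.μ[fun ω' => (S.y t ω' - S.f t ω' (S.x t ω')) ^ 2 | S.ℱ (t - 1)]) ω := by
    filter_upwards [hsplit, hy2_cond] with ω h1 h2
    rw [h2] at h1
    have := hvar
    linarith [h1.symm.le, h1.le]
  -- conclusion
  filter_upwards [hcv, hAV_ae, S.horacle_lo t, S.horacle_hi t] with ω hcvω hAVω hloω hhiω
  obtain ⟨hq1, hq2⟩ := (hpstar t ω).1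
  simp only [sigmaStarSq]
  rw [hcvω]
  have key := key_ineq (A := (S.μ[fun ω' => (S.f t ω' (S.x t ω')) ^ 2 | S.ℱ (t - 1)]) ω
      + 2 * (S.μ[fun ω' => S.f t ω' (S.x t ω') * (S.y t ω' - S.f t ω' (S.x t ω'))
          | S.ℱ (t - 1)]) ω - (μy S) ^ 2)
    (V := (S.μ[fun ω' => (S.y t ω' - S.f t ω' (S.x t ω')) ^ 2 | S.ℱ (t - 1)]) ω)
    (Φ := S.Φ t ω) (p := S.p t ω) (q := pstar t ω)
    S.hβ (S.hpmem t ω).1 (hp1 ω) hq1 (le_trans hq2 S.hτ) (S.hΦ_nonneg t ω)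
    hloω hhiω hAVω S.hc₀ S.hc₁ S.hc₀c₁
  have e : S.c₀ * S.c₁ * ((S.μ[fun ω' => (S.f t ω' (S.x t ω')) ^ 2 | S.ℱ (t - 1)]) ω
      + 1 / pstar t ω
        * (S.μ[fun ω' => (S.y t ω' - S.f t ω' (S.x t ω')) ^ 2 | S.ℱ (t - 1)]) ω
      + 2 * (S.μ[fun ω' => S.f t ω' (S.x t ω') * (S.y t ω' - S.f t ω' (S.x t ω'))
          | S.ℱ (t - 1)]) ω - μy S ^ 2)
      = S.c₀ * S.c₁ * (((S.μ[fun ω' => (S.f t ω' (S.x t ω')) ^ 2 | S.ℱ (t - 1)]) ω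
      + 2 * (S.μ[fun ω' => S.f t ω' (S.x t ω') * (S.y t ω' - S.f t ω' (S.x t ω'))
          | S.ℱ (t - 1)]) ω - (μy S) ^ 2)
      + (1 / pstar t ω)
        * (S.μ[fun ω' => (S.y t ω' - S.f t ω' (S.x t ω')) ^ 2 | S.ℱ (t - 1)]) ω) := by
    ring
  rw [e]
  linarith [key]
end

section
/- (Cumulative variance bound, Eq. (28) in the proof of Theorem 6.) Under the oracle assumption with c₀c₁ ≥ 1 and with F_{t−1}-measurable query probabilities p_t ∈ [β, τ], the cumulative conditional variance satisfies, for every t: Σ_{s=1}^t σ_s² ≤ c₀c₁ · σ*²_{1:t} + c₀ · Regret_t(p*_{1:t}) almost surely, where σ_s² := E[(g_s − μ_y)² | F_{s−1}], σ*²_{1:t} := Σ_{s=1}^t σ*²_{s,(t)}, and Regret_t(p*_{1:t}) := Σ_{s=1}^t Φ_s(x_s)/p_s − Σ_{s=1}^t Φ_s(x_s)/p*_{1:t}. -/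
/-
STATEMENT 12 (Cumulative variance bound, Eq. (28) in the proof of Theorem 6): Under the
oracle assumption with c₀c₁ ≥ 1 and with F_{t−1}-measurable query probabilities p_t ∈ [β, τ],
the cumulative conditional variance satisfies, for every t:
Σ_{s=1}^t σ_s² ≤ c₀c₁ · σ*²_{1:t} + c₀ · Regret_t(p*_{1:t}) almost surely, where
σ_s² := E[(g_s − μ_y)² | F_{s−1}], σ*²_{1:t} := Σ_{s=1}^t σ*²_{s,(t)}, and
Regret_t(p*_{1:t}) := Σ_{s=1}^t Φ_s(x_s)/p_s − Σ_{s=1}^t Φ_s(x_s)/p*_{1:t}.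
-/

open MeasureTheory ProbabilityTheory

variable {Ω : Type*} [MeasurableSpace Ω]

section AuxCVB

private lemma real_key {c₀ c₁ X E Φ a b : ℝ} (hcc : 1 ≤ c₀ * c₁) (hc₀ : 0 < c₀)
    (hXE : 0 ≤ X + E) (hΦE : Φ ≤ c₁ * E) (hEΦ : E ≤ c₀ * Φ) (ha : 1 ≤ a) (hb : 1 ≤ b) :
    X + a * E ≤ c₀ * c₁ * (X + b * E) + c₀ * (Φ * a - Φ * b) := by
  nlinarith [mul_nonneg (sub_nonneg.2 hcc) hXE,
    mul_nonneg (mul_nonneg hc₀.le (sub_nonneg.2 hΦE)) (sub_nonneg.2 hb),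
    mul_nonneg (sub_nonneg.2 (by nlinarith : E ≤ c₀ * Φ)) (sub_nonneg.2 ha)]

private lemma aux_pair_meas (S : ActiveQuerySetup Ω) (s : ℕ) :
    Measurable (fun ω => (S.x s ω, S.y s ω)) :=
  ((S.hx s).mono (S.ℱ.le s) le_rfl).prodMk ((S.hy s).mono (S.ℱ.le s) le_rfl)

private lemma aux_int_y (S : ActiveQuerySetup Ω) (s : ℕ) :
    ∫ ω, S.y s ω ∂S.μ = μy S := by
  have h1 : ∫ z : ℝ × ℝ, z.2 ∂(S.μ.map (fun ω => (S.x s ω, S.y s ω)))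
      = ∫ ω, S.y s ω ∂S.μ :=
    integral_map (aux_pair_meas S s).aemeasurable measurable_snd.aestronglyMeasurable
  have h2 : ∫ z : ℝ × ℝ, z.2 ∂(S.μ.map (fun ω => (S.x 1 ω, S.y 1 ω)))
      = ∫ ω, S.y 1 ω ∂S.μ :=
    integral_map (aux_pair_meas S 1).aemeasurable measurable_snd.aestronglyMeasurable
  rw [μy, ← h1, ← h2, S.hident s 1]

private lemma aux_condExp_y (S : ActiveQuerySetup Ω) (s : ℕ) :
    S.μ[S.y s | S.ℱ (s - 1)] =ᵐ[S.μ] fun _ => μy S := by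
  haveI := S.isProb
  have hySM : StronglyMeasurable[MeasurableSpace.comap
      (fun ω => (S.x s ω, S.y s ω)) inferInstance] (S.y s) :=
    (measurable_snd.comp (Measurable.of_comap_le le_rfl)).stronglyMeasurable
  have h := condExp_indep_eq (aux_pair_meas S s).comap_le (S.ℱ.le (s - 1)) hySM (S.hindep s)
  refine h.trans ?_
  rw [aux_int_y S s]

/-- the σ-algebra `ℱ (s-1) ⊔ σ(x_s, y_s)`. -/
noncomputable def mseq (S : ActiveQuerySetup Ω) (s : ℕ) : MeasurableSpace Ω :=
  (S.ℱ (s - 1)) ⊔ MeasurableSpace.comap (fun ω => (S.x s ω, S.y s ω)) inferInstance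

private lemma aux_mseq_le (S : ActiveQuerySetup Ω) (s : ℕ) :
    mseq S s ≤ ‹MeasurableSpace Ω› :=
  sup_le (S.ℱ.le (s - 1)) (aux_pair_meas S s).comap_le

private lemma aux_F_le_mseq (S : ActiveQuerySetup Ω) (s : ℕ) :
    S.ℱ (s - 1) ≤ mseq S s := le_sup_left

private lemma aux_x_mseq (S : ActiveQuerySetup Ω) (s : ℕ) :
    Measurable[mseq S s] (S.x s) := by
  have h : Measurable[MeasurableSpace.comap (fun ω => (S.x s ω, S.y s ω)) inferInstance]
      (S.x s) := measurable_fst.comp (Measurable.of_comap_le le_rfl)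
  exact h.mono le_sup_right le_rfl

private lemma aux_y_mseq (S : ActiveQuerySetup Ω) (s : ℕ) :
    Measurable[mseq S s] (S.y s) := by
  have h : Measurable[MeasurableSpace.comap (fun ω => (S.x s ω, S.y s ω)) inferInstance]
      (S.y s) := measurable_snd.comp (Measurable.of_comap_le le_rfl)
  exact h.mono le_sup_right le_rfl

private lemma aux_F_meas_mseq (S : ActiveQuerySetup Ω) (s : ℕ) :
    Measurable[mseq S s] (fun ω => S.f s ω (S.x s ω)) := by
  have hφ : @Measurable Ω (Ω × ℝ) (mseq S s) ((S.ℱ (s - 1)).prod (borel ℝ))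
      (fun ω => (ω, S.x s ω)) := by
    rw [measurable_iff_comap_le]
    show ((S.ℱ (s - 1)).comap Prod.fst ⊔ (borel ℝ).comap Prod.snd).comap
      (fun ω => (ω, S.x s ω)) ≤ mseq S s
    rw [MeasurableSpace.comap_sup, MeasurableSpace.comap_comp, MeasurableSpace.comap_comp]
    have e1 : (Prod.fst ∘ fun ω : Ω => (ω, S.x s ω)) = id := rfl
    have e2 : (Prod.snd ∘ fun ω : Ω => (ω, S.x s ω)) = S.x s := rfl
    rw [e1, e2, MeasurableSpace.comap_id]
    exact sup_le (aux_F_le_mseq S s) (aux_x_mseq S s).comap_le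
  exact (S.hf s).comp hφ

private lemma aux_F_meas (S : ActiveQuerySetup Ω) (s : ℕ) :
    Measurable (fun ω => S.f s ω (S.x s ω)) :=
  (aux_F_meas_mseq S s).mono (aux_mseq_le S s) le_rfl

private lemma aux_int_F (S : ActiveQuerySetup Ω) (s : ℕ) :
    Integrable (fun ω => S.f s ω (S.x s ω)) S.μ := by
  haveI := S.isProb
  refine Integrable.mono' (((S.hf2int s).add (integrable_const 1)).const_mul (1/2))
    (aux_F_meas S s).aestronglyMeasurable (ae_of_all _ fun ω => ?_)
  rw [Real.norm_eq_abs, Pi.add_apply]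
  nlinarith [sq_nonneg (|S.f s ω (S.x s ω)| - 1), sq_abs (S.f s ω (S.x s ω)),
    abs_nonneg (S.f s ω (S.x s ω))]

private lemma aux_int_R (S : ActiveQuerySetup Ω) (s : ℕ) :
    Integrable (fun ω => S.y s ω - S.f s ω (S.x s ω)) S.μ :=
  (S.hyint s).sub (aux_int_F S s)

private lemma aux_int_y2 (S : ActiveQuerySetup Ω) (s : ℕ) :
    Integrable (fun ω => (S.y s ω) ^ 2) S.μ := by
  refine (((S.hf2int s).add ((S.hfrint s).const_mul 2)).add (S.hr2int s)).congr
    (ae_of_all _ fun ω => ?_)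
  simp only [Pi.add_apply]
  ring

/-- nonnegativity of `E[f²|m] + E[r²|m] + 2E[fr|m] − μy²`. -/
private lemma aux_V_nonneg (S : ActiveQuerySetup Ω) (s : ℕ) :
    ∀ᵐ ω ∂S.μ,
      0 ≤ (S.μ[fun ω' => (S.f s ω' (S.x s ω')) ^ 2 | S.ℱ (s - 1)]) ω
        + (S.μ[fun ω' => (S.y s ω' - S.f s ω' (S.x s ω')) ^ 2 | S.ℱ (s - 1)]) ω
        + 2 * (S.μ[fun ω' => S.f s ω' (S.x s ω') * (S.y s ω' - S.f s ω' (S.x s ω'))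
            | S.ℱ (s - 1)]) ω
        - (μy S) ^ 2 := by
  haveI := S.isProb
  set c : ℝ := μy S with hc
  have hm : S.ℱ (s - 1) ≤ ‹MeasurableSpace Ω› := S.ℱ.le (s - 1)
  have h0 : 0 ≤ᵐ[S.μ] S.μ[fun ω => (S.y s ω - c) ^ 2 | S.ℱ (s - 1)] :=
    condExp_nonneg (ae_of_all _ fun ω => sq_nonneg _)
  have e0 : (fun ω => (S.y s ω - c) ^ 2)
      = ((fun ω => (S.y s ω) ^ 2) + fun ω => (-(2*c)) * S.y s ω) + fun _ => c ^ 2 := by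
    funext ω; simp only [Pi.add_apply]; ring
  rw [e0] at h0
  have e1 : S.μ[((fun ω => (S.y s ω) ^ 2) + fun ω => (-(2*c)) * S.y s ω) + (fun _ => c ^ 2)
        | S.ℱ (s - 1)]
      =ᵐ[S.μ] S.μ[(fun ω => (S.y s ω) ^ 2) + fun ω => (-(2*c)) * S.y s ω | S.ℱ (s - 1)]
        + S.μ[(fun _ => c ^ 2) | S.ℱ (s - 1)] :=
    condExp_add (m := _) ((aux_int_y2 S s).add ((S.hyint s).const_mul _)) (integrable_const _)
  have e2 : S.μ[(fun ω => (S.y s ω) ^ 2) + fun ω => (-(2*c)) * S.y s ω | S.ℱ (s - 1)]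
      =ᵐ[S.μ] S.μ[fun ω => (S.y s ω) ^ 2 | S.ℱ (s - 1)]
        + S.μ[fun ω => (-(2*c)) * S.y s ω | S.ℱ (s - 1)] :=
    condExp_add (m := _) (aux_int_y2 S s) ((S.hyint s).const_mul _)
  have e3 : S.μ[fun ω => (-(2*c)) * S.y s ω | S.ℱ (s - 1)]
      =ᵐ[S.μ] (-(2*c)) • S.μ[S.y s | S.ℱ (s - 1)] :=
    condExp_smul (m := _) (-(2*c)) (S.y s)
  have e4 := aux_condExp_y S s
  have e5 : S.μ[(fun _ : Ω => c ^ 2) | S.ℱ (s - 1)] = fun _ => c ^ 2 :=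
    condExp_const hm _
  have e6 : (fun ω => (S.y s ω) ^ 2)
      = ((fun ω' => (S.f s ω' (S.x s ω')) ^ 2)
          + fun ω' => 2 * (S.f s ω' (S.x s ω') * (S.y s ω' - S.f s ω' (S.x s ω'))))
        + fun ω' => (S.y s ω' - S.f s ω' (S.x s ω')) ^ 2 := by
    funext ω; simp only [Pi.add_apply]; ring
  have e7 : S.μ[fun ω => (S.y s ω) ^ 2 | S.ℱ (s - 1)]
      =ᵐ[S.μ] S.μ[(fun ω' => (S.f s ω' (S.x s ω')) ^ 2)
          + (fun ω' => 2 * (S.f s ω' (S.x s ω') * (S.y s ω' - S.f s ω' (S.x s ω'))))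
          | S.ℱ (s - 1)]
        + S.μ[fun ω' => (S.y s ω' - S.f s ω' (S.x s ω')) ^ 2 | S.ℱ (s - 1)] := by
    rw [e6]
    exact condExp_add (m := _) ((S.hf2int s).add ((S.hfrint s).const_mul 2)) (S.hr2int s)
  have e8 : S.μ[(fun ω' => (S.f s ω' (S.x s ω')) ^ 2)
        + (fun ω' => 2 * (S.f s ω' (S.x s ω') * (S.y s ω' - S.f s ω' (S.x s ω'))))
        | S.ℱ (s - 1)]
      =ᵐ[S.μ] S.μ[fun ω' => (S.f s ω' (S.x s ω')) ^ 2 | S.ℱ (s - 1)]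
        + S.μ[fun ω' => 2 * (S.f s ω' (S.x s ω') * (S.y s ω' - S.f s ω' (S.x s ω')))
            | S.ℱ (s - 1)] :=
    condExp_add (m := _) (S.hf2int s) ((S.hfrint s).const_mul 2)
  have e9 : S.μ[fun ω' => 2 * (S.f s ω' (S.x s ω') * (S.y s ω' - S.f s ω' (S.x s ω')))
        | S.ℱ (s - 1)]
      =ᵐ[S.μ] (2 : ℝ) • S.μ[fun ω' => S.f s ω' (S.x s ω') * (S.y s ω' - S.f s ω' (S.x s ω'))
        | S.ℱ (s - 1)] :=
    condExp_smul (m := _) (2 : ℝ) _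
  filter_upwards [h0, e1, e2, e3, e4, e7, e8, e9] with ω h0 h1 h2 h3 h4 h7 h8 h9
  rw [e5] at h1
  simp only [Pi.add_apply, Pi.smul_apply, Pi.zero_apply, smul_eq_mul] at h0 h1 h2 h3 h4 h7 h8 h9 ⊢
  simp only [hc] at h0 h1 h2 h3 h7 h8 h9 ⊢
  rw [h4] at h3
  linarith [h0, h1, h2, h3, h4, h7, h8, h9]

end AuxCVB


private lemma aux_condVar_eq (S : ActiveQuerySetup Ω) (s : ℕ) :
    condVar S s =ᵐ[S.μ] fun ω =>
      (S.μ[fun ω' => (S.f s ω' (S.x s ω')) ^ 2 | S.ℱ (s - 1)]) ω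
        + (1 / S.p s ω) * (S.μ[fun ω' => (S.y s ω' - S.f s ω' (S.x s ω')) ^ 2 | S.ℱ (s - 1)]) ω
        + 2 * (S.μ[fun ω' => S.f s ω' (S.x s ω') * (S.y s ω' - S.f s ω' (S.x s ω'))
            | S.ℱ (s - 1)]) ω
        - (μy S) ^ 2 := by
  haveI := S.isProb
  have hPpos : ∀ ω, 0 < S.p s ω := fun ω => lt_of_lt_of_le S.hβ (S.hpmem s ω).1
  have hPinv : ∀ ω, (S.p s ω)⁻¹ ≤ S.β⁻¹ := fun ω => inv_anti₀ S.hβ (S.hpmem s ω).1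
  -- measurability at the ambient level
  have hFm : Measurable (fun ω => S.f s ω (S.x s ω)) := aux_F_meas S s
  have hym : Measurable (S.y s) := (S.hy s).mono (S.ℱ.le s) le_rfl
  have hRm : Measurable (fun ω => S.y s ω - S.f s ω (S.x s ω)) := hym.sub hFm
  have hPm : Measurable (S.p s) := (S.hpmeas s).mono (S.ℱ.le (s - 1)) le_rfl
  have hξm : Measurable (S.ξ s) := (S.hξmeas s).mono (S.ℱ.le s) le_rfl
  have hKm : Measurable (fun ω => 2 * ((S.f s ω (S.x s ω) - μy S) * (S.y s ω - S.f s ω (S.x s ω))) + (S.p s ω)⁻¹ * (S.y s ω - S.f s ω (S.x s ω)) ^ 2) :=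
    (((hFm.sub measurable_const).mul hRm).const_mul 2).add (hPm.inv.mul (hRm.pow_const 2))
  have hhm : Measurable (fun ω => (S.p s ω)⁻¹ * (2 * ((S.f s ω (S.x s ω) - μy S) * (S.y s ω - S.f s ω (S.x s ω))) + (S.p s ω)⁻¹ * (S.y s ω - S.f s ω (S.x s ω)) ^ 2)) := hPm.inv.mul hKm
  have hξb : ∀ᵐ ω ∂S.μ, |S.ξ s ω| ≤ 1 := by
    filter_upwards [S.hξ01 s] with ω h
    rcases h with h | h <;> rw [h] <;> norm_num
  -- integrability
  have hFRcint : Integrable (fun ω => (S.f s ω (S.x s ω) - μy S) * (S.y s ω - S.f s ω (S.x s ω))) S.μ := by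
    refine ((S.hfrint s).sub ((aux_int_R S s).const_mul (μy S))).congr
      (ae_of_all _ fun ω => ?_)
    simp only [Pi.sub_apply]
    ring
  have hPRint : Integrable (((fun ω => (S.p s ω)⁻¹) * (fun ω' => (S.y s ω' - S.f s ω' (S.x s ω')) ^ 2))) S.μ := by
    refine Integrable.mono' ((S.hr2int s).const_mul S.β⁻¹)
      (hPm.inv.mul (hRm.pow_const 2)).aestronglyMeasurable (ae_of_all _ fun ω => ?_)
    simp only [Pi.mul_apply]
    rw [Real.norm_eq_abs, abs_mul, abs_inv, abs_of_pos (hPpos ω), abs_of_nonneg (sq_nonneg _)]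
    exact mul_le_mul_of_nonneg_right (hPinv ω) (sq_nonneg _)
  have hKint : Integrable (fun ω => 2 * ((S.f s ω (S.x s ω) - μy S) * (S.y s ω - S.f s ω (S.x s ω))) + (S.p s ω)⁻¹ * (S.y s ω - S.f s ω (S.x s ω)) ^ 2) S.μ := by
    refine Integrable.add ?_ ?_
    · exact (hFRcint.const_mul 2).congr (ae_of_all _ fun ω => by ring)
    · exact hPRint.congr (ae_of_all _ fun ω => by simp only [Pi.mul_apply])
  have hhint : Integrable (fun ω => (S.p s ω)⁻¹ * (2 * ((S.f s ω (S.x s ω) - μy S) * (S.y s ω - S.f s ω (S.x s ω))) + (S.p s ω)⁻¹ * (S.y s ω - S.f s ω (S.x s ω)) ^ 2)) S.μ := by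
    refine Integrable.mono' (hKint.abs.const_mul S.β⁻¹) hhm.aestronglyMeasurable
      (ae_of_all _ fun ω => ?_)
    rw [Real.norm_eq_abs, abs_mul, abs_inv, abs_of_pos (hPpos ω)]
    exact mul_le_mul_of_nonneg_right (hPinv ω) (abs_nonneg _)
  have hHint : Integrable ((fun ω => (S.p s ω)⁻¹ * (2 * ((S.f s ω (S.x s ω) - μy S) * (S.y s ω - S.f s ω (S.x s ω))) + (S.p s ω)⁻¹ * (S.y s ω - S.f s ω (S.x s ω)) ^ 2)) * S.ξ s) S.μ := by
    refine Integrable.mono' hhint.abs (hhm.mul hξm).aestronglyMeasurable ?_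
    filter_upwards [hξb] with ω hb
    rw [Pi.mul_apply, Real.norm_eq_abs, abs_mul]
    calc |(fun ω => (S.p s ω)⁻¹ * (2 * ((S.f s ω (S.x s ω) - μy S) * (S.y s ω - S.f s ω (S.x s ω))) + (S.p s ω)⁻¹ * (S.y s ω - S.f s ω (S.x s ω)) ^ 2)) ω| * |S.ξ s ω| ≤ |(fun ω => (S.p s ω)⁻¹ * (2 * ((S.f s ω (S.x s ω) - μy S) * (S.y s ω - S.f s ω (S.x s ω))) + (S.p s ω)⁻¹ * (S.y s ω - S.f s ω (S.x s ω)) ^ 2)) ω| * 1 :=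
          mul_le_mul_of_nonneg_left hb (abs_nonneg _)
      _ = |(fun ω => (S.p s ω)⁻¹ * (2 * ((S.f s ω (S.x s ω) - μy S) * (S.y s ω - S.f s ω (S.x s ω))) + (S.p s ω)⁻¹ * (S.y s ω - S.f s ω (S.x s ω)) ^ 2)) ω| := mul_one _
  have hξint : Integrable (S.ξ s) S.μ := by
    refine Integrable.mono' (integrable_const 1) hξm.aestronglyMeasurable ?_
    filter_upwards [hξb] with ω hb
    rwa [Real.norm_eq_abs]
  have hAint : Integrable (fun ω => (S.f s ω (S.x s ω) - μy S) ^ 2) S.μ := by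
    refine (((S.hf2int s).sub ((aux_int_F S s).const_mul (2 * μy S))).add
      (integrable_const ((μy S) ^ 2))).congr (ae_of_all _ fun ω => ?_)
    simp only [Pi.add_apply, Pi.sub_apply]
    ring
  -- step 1: expand the square using ξ ∈ {0,1}
  have e1 : (fun ω => (g S s ω - μy S) ^ 2) =ᵐ[S.μ] (fun ω => (S.f s ω (S.x s ω) - μy S) ^ 2) + ((fun ω => (S.p s ω)⁻¹ * (2 * ((S.f s ω (S.x s ω) - μy S) * (S.y s ω - S.f s ω (S.x s ω))) + (S.p s ω)⁻¹ * (S.y s ω - S.f s ω (S.x s ω)) ^ 2)) * S.ξ s) := by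
    filter_upwards [S.hξ01 s] with ω h
    simp only [Pi.add_apply, Pi.mul_apply, g]
    rcases h with h | h <;> rw [h] <;> ring
  have e2 : condVar S s =ᵐ[S.μ] S.μ[(fun ω => (S.f s ω (S.x s ω) - μy S) ^ 2) + ((fun ω => (S.p s ω)⁻¹ * (2 * ((S.f s ω (S.x s ω) - μy S) * (S.y s ω - S.f s ω (S.x s ω))) + (S.p s ω)⁻¹ * (S.y s ω - S.f s ω (S.x s ω)) ^ 2)) * S.ξ s)|S.ℱ (s - 1)] := condExp_congr_ae e1
  have e3 : S.μ[(fun ω => (S.f s ω (S.x s ω) - μy S) ^ 2) + ((fun ω => (S.p s ω)⁻¹ * (2 * ((S.f s ω (S.x s ω) - μy S) * (S.y s ω - S.f s ω (S.x s ω))) + (S.p s ω)⁻¹ * (S.y s ω - S.f s ω (S.x s ω)) ^ 2)) * S.ξ s)|S.ℱ (s - 1)] =ᵐ[S.μ] S.μ[(fun ω => (S.f s ω (S.x s ω) - μy S) ^ 2)|S.ℱ (s - 1)] + S.μ[((fun ω => (S.p s ω)⁻¹ * (2 * ((S.f s ω (S.x s ω) - μy S) * (S.y s ω - S.f s ω (S.x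 s ω))) + (S.p s ω)⁻¹ * (S.y s ω - S.f s ω (S.x s ω)) ^ 2)) * S.ξ s)|S.ℱ (s - 1)] :=
    condExp_add (m := _) hAint hHint
  -- conditional expectation of H: replace ξ by p via the tower property
  have hSMh : StronglyMeasurable[mseq S s] (fun ω => (S.p s ω)⁻¹ * (2 * ((S.f s ω (S.x s ω) - μy S) * (S.y s ω - S.f s ω (S.x s ω))) + (S.p s ω)⁻¹ * (S.y s ω - S.f s ω (S.x s ω)) ^ 2)) := by
    refine Measurable.stronglyMeasurable ?_
    have hFG := aux_F_meas_mseq S s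
    have hyG := aux_y_mseq S s
    have hPG : Measurable[mseq S s] (S.p s) := (S.hpmeas s).mono (aux_F_le_mseq S s) le_rfl
    exact hPG.inv.mul ((((hFG.sub measurable_const).mul (hyG.sub hFG)).const_mul 2).add
      (hPG.inv.mul ((hyG.sub hFG).pow_const 2)))
  have t1 : S.μ[((fun ω => (S.p s ω)⁻¹ * (2 * ((S.f s ω (S.x s ω) - μy S) * (S.y s ω - S.f s ω (S.x s ω))) + (S.p s ω)⁻¹ * (S.y s ω - S.f s ω (S.x s ω)) ^ 2)) * S.ξ s)|S.ℱ (s - 1)] =ᵐ[S.μ] S.μ[S.μ[((fun ω => (S.p s ω)⁻¹ * (2 * ((S.f s ω (S.x s ω) - μy S) * (S.y s ω - S.f s ω (S.x s ω))) + (S.p s ω)⁻¹ * (S.y s ω - S.f s ω (S.x s ω)) ^ 2)) * S.ξ s)|mseq S s]|S.ℱ (s - 1)] :=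
    (condExp_condExp_of_le (aux_F_le_mseq S s) (aux_mseq_le S s)).symm
  have t2 : S.μ[((fun ω => (S.p s ω)⁻¹ * (2 * ((S.f s ω (S.x s ω) - μy S) * (S.y s ω - S.f s ω (S.x s ω))) + (S.p s ω)⁻¹ * (S.y s ω - S.f s ω (S.x s ω)) ^ 2)) * S.ξ s)|mseq S s] =ᵐ[S.μ] (fun ω => (S.p s ω)⁻¹ * (2 * ((S.f s ω (S.x s ω) - μy S) * (S.y s ω - S.f s ω (S.x s ω))) + (S.p s ω)⁻¹ * (S.y s ω - S.f s ω (S.x s ω)) ^ 2)) * S.μ[S.ξ s|mseq S s] :=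
    condExp_mul_of_stronglyMeasurable_left hSMh hHint hξint
  have t3 : S.μ[S.ξ s|mseq S s] =ᵐ[S.μ] S.p s := S.hξcond s
  have t4 : S.μ[((fun ω => (S.p s ω)⁻¹ * (2 * ((S.f s ω (S.x s ω) - μy S) * (S.y s ω - S.f s ω (S.x s ω))) + (S.p s ω)⁻¹ * (S.y s ω - S.f s ω (S.x s ω)) ^ 2)) * S.ξ s)|mseq S s] =ᵐ[S.μ] fun ω => (fun ω => (S.p s ω)⁻¹ * (2 * ((S.f s ω (S.x s ω) - μy S) * (S.y s ω - S.f s ω (S.x s ω))) + (S.p s ω)⁻¹ * (S.y s ω - S.f s ω (S.x s ω)) ^ 2)) ω * S.p s ω := by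
    refine t2.trans ?_
    filter_upwards [t3] with ω h
    rw [Pi.mul_apply, h]
  have t5 : S.μ[((fun ω => (S.p s ω)⁻¹ * (2 * ((S.f s ω (S.x s ω) - μy S) * (S.y s ω - S.f s ω (S.x s ω))) + (S.p s ω)⁻¹ * (S.y s ω - S.f s ω (S.x s ω)) ^ 2)) * S.ξ s)|S.ℱ (s - 1)] =ᵐ[S.μ] S.μ[fun ω => (fun ω => (S.p s ω)⁻¹ * (2 * ((S.f s ω (S.x s ω) - μy S) * (S.y s ω - S.f s ω (S.x s ω))) + (S.p s ω)⁻¹ * (S.y s ω - S.f s ω (S.x s ω)) ^ 2)) ω * S.p s ω|S.ℱ (s - 1)] :=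
    t1.trans (condExp_congr_ae t4)
  have e5 : (fun ω => (fun ω => (S.p s ω)⁻¹ * (2 * ((S.f s ω (S.x s ω) - μy S) * (S.y s ω - S.f s ω (S.x s ω))) + (S.p s ω)⁻¹ * (S.y s ω - S.f s ω (S.x s ω)) ^ 2)) ω * S.p s ω) = ((2 : ℝ) • ((fun ω' => S.f s ω' (S.x s ω') * (S.y s ω' - S.f s ω' (S.x s ω'))) - (μy S) • (fun ω => S.y s ω - S.f s ω (S.x s ω)))) + ((fun ω => (S.p s ω)⁻¹) * (fun ω' => (S.y s ω' - S.f s ω' (S.x s ω')) ^ 2)) := by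
    funext ω
    have hne : S.p s ω ≠ 0 := (hPpos ω).ne'
    simp only [Pi.add_apply, Pi.mul_apply, Pi.smul_apply, Pi.sub_apply, smul_eq_mul]
    field_simp
  have t6 : S.μ[fun ω => (fun ω => (S.p s ω)⁻¹ * (2 * ((S.f s ω (S.x s ω) - μy S) * (S.y s ω - S.f s ω (S.x s ω))) + (S.p s ω)⁻¹ * (S.y s ω - S.f s ω (S.x s ω)) ^ 2)) ω * S.p s ω|S.ℱ (s - 1)] = S.μ[((2 : ℝ) • ((fun ω' => S.f s ω' (S.x s ω') * (S.y s ω' - S.f s ω' (S.x s ω'))) - (μy S) • (fun ω => S.y s ω - S.f s ω (S.x s ω)))) + ((fun ω => (S.p s ω)⁻¹) * (fun ω' => (S.y s ω' - S.f s ω' (S.x s ω')) ^ 2))|S.ℱ (s - 1)] := by rw [e5]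
  have hDint : Integrable (((2 : ℝ) • ((fun ω' => S.f s ω' (S.x s ω') * (S.y s ω' - S.f s ω' (S.x s ω'))) - (μy S) • (fun ω => S.y s ω - S.f s ω (S.x s ω))))) S.μ :=
    Integrable.smul (2 : ℝ) ((S.hfrint s).sub (Integrable.smul (μy S) (aux_int_R S s)))
  have t7 : S.μ[((2 : ℝ) • ((fun ω' => S.f s ω' (S.x s ω') * (S.y s ω' - S.f s ω' (S.x s ω'))) - (μy S) • (fun ω => S.y s ω - S.f s ω (S.x s ω)))) + ((fun ω => (S.p s ω)⁻¹) * (fun ω' => (S.y s ω' - S.f s ω' (S.x s ω')) ^ 2))|S.ℱ (s - 1)] =ᵐ[S.μ] S.μ[((2 : ℝ) • ((fun ω' => S.f s ω' (S.x s ω') * (S.y s ω' - S.f s ω' (S.x s ω'))) - (μy S) • (fun ω => S.y s ω - S.f s ω (S.x s ω))))|S.ℱ (s - 1)] + S.μ[((fun ω => (S.p s ω)⁻¹) * (fun ω' => (S.y s ω' - S.f s ω' (S.x s ω')) ^ 2))|S.ℱ (s - 1)] :=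
    condExp_add (m := _) hDint hPRint
  have t8 : S.μ[((fun ω => (S.p s ω)⁻¹) * (fun ω' => (S.y s ω' - S.f s ω' (S.x s ω')) ^ 2))|S.ℱ (s - 1)] =ᵐ[S.μ] (fun ω => (S.p s ω)⁻¹) * S.μ[(fun ω' => (S.y s ω' - S.f s ω' (S.x s ω')) ^ 2)|S.ℱ (s - 1)] :=
    condExp_mul_of_stronglyMeasurable_left ((S.hpmeas s).inv.stronglyMeasurable)
      hPRint (S.hr2int s)
  have t9 : S.μ[((2 : ℝ) • ((fun ω' => S.f s ω' (S.x s ω') * (S.y s ω' - S.f s ω' (S.x s ω'))) - (μy S) • (fun ω => S.y s ω - S.f s ω (S.x s ω))))|S.ℱ (s - 1)] =ᵐ[S.μ] (2 : ℝ) • S.μ[(fun ω' => S.f s ω' (S.x s ω') * (S.y s ω' - S.f s ω' (S.x s ω'))) - (μy S) • (fun ω => S.y s ω - S.f s ω (S.x s ω))|S.ℱ (s - 1)] :=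
    condExp_smul (m := _) (2 : ℝ) _
  have t10 : S.μ[(fun ω' => S.f s ω' (S.x s ω') * (S.y s ω' - S.f s ω' (S.x s ω'))) - (μy S) • (fun ω => S.y s ω - S.f s ω (S.x s ω))|S.ℱ (s - 1)] =ᵐ[S.μ] S.μ[(fun ω' => S.f s ω' (S.x s ω') * (S.y s ω' - S.f s ω' (S.x s ω')))|S.ℱ (s - 1)] - S.μ[(μy S) • (fun ω => S.y s ω - S.f s ω (S.x s ω))|S.ℱ (s - 1)] :=
    condExp_sub (m := _) (S.hfrint s) (Integrable.smul (μy S) (aux_int_R S s))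
  have t11 : S.μ[(μy S) • (fun ω => S.y s ω - S.f s ω (S.x s ω))|S.ℱ (s - 1)] =ᵐ[S.μ] (μy S) • S.μ[(fun ω => S.y s ω - S.f s ω (S.x s ω))|S.ℱ (s - 1)] :=
    condExp_smul (m := _) (μy S) _
  have t12 : S.μ[(fun ω => S.y s ω - S.f s ω (S.x s ω))|S.ℱ (s - 1)] = S.μ[S.y s - (fun ω => S.f s ω (S.x s ω))|S.ℱ (s - 1)] := rfl
  have t13 : S.μ[S.y s - (fun ω => S.f s ω (S.x s ω))|S.ℱ (s - 1)] =ᵐ[S.μ] S.μ[S.y s|S.ℱ (s - 1)] - S.μ[(fun ω => S.f s ω (S.x s ω))|S.ℱ (s - 1)] :=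
    condExp_sub (m := _) (S.hyint s) (aux_int_F S s)
  have t14 := aux_condExp_y S s
  -- conditional expectation of A
  have u0 : (fun ω => (S.f s ω (S.x s ω) - μy S) ^ 2) = ((fun ω' => (S.f s ω' (S.x s ω')) ^ 2) - (2 * μy S) • (fun ω => S.f s ω (S.x s ω))) + (fun _ => (μy S) ^ 2) := by
    funext ω
    simp only [Pi.add_apply, Pi.sub_apply, Pi.smul_apply, smul_eq_mul]
    ring
  have u1 : S.μ[(fun ω => (S.f s ω (S.x s ω) - μy S) ^ 2)|S.ℱ (s - 1)] = S.μ[((fun ω' => (S.f s ω' (S.x s ω')) ^ 2) - (2 * μy S) • (fun ω => S.f s ω (S.x s ω))) + (fun _ => (μy S) ^ 2)|S.ℱ (s - 1)] := by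
    rw [u0]
  have u2 : S.μ[((fun ω' => (S.f s ω' (S.x s ω')) ^ 2) - (2 * μy S) • (fun ω => S.f s ω (S.x s ω))) + (fun _ => (μy S) ^ 2)|S.ℱ (s - 1)]
      =ᵐ[S.μ] S.μ[(fun ω' => (S.f s ω' (S.x s ω')) ^ 2) - (2 * μy S) • (fun ω => S.f s ω (S.x s ω))|S.ℱ (s - 1)] + S.μ[fun _ : Ω => (μy S) ^ 2|S.ℱ (s - 1)] :=
    condExp_add (m := _) ((S.hf2int s).sub (Integrable.smul (2 * μy S) (aux_int_F S s)))
      (integrable_const _)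
  have u3 : S.μ[(fun ω' => (S.f s ω' (S.x s ω')) ^ 2) - (2 * μy S) • (fun ω => S.f s ω (S.x s ω))|S.ℱ (s - 1)] =ᵐ[S.μ] S.μ[(fun ω' => (S.f s ω' (S.x s ω')) ^ 2)|S.ℱ (s - 1)] - S.μ[(2 * μy S) • (fun ω => S.f s ω (S.x s ω))|S.ℱ (s - 1)] :=
    condExp_sub (m := _) (S.hf2int s) (Integrable.smul (2 * μy S) (aux_int_F S s))
  have u4 : S.μ[(2 * μy S) • (fun ω => S.f s ω (S.x s ω))|S.ℱ (s - 1)] =ᵐ[S.μ] (2 * μy S) • S.μ[(fun ω => S.f s ω (S.x s ω))|S.ℱ (s - 1)] :=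
    condExp_smul (m := _) (2 * μy S) _
  have u5 : S.μ[fun _ : Ω => (μy S) ^ 2|S.ℱ (s - 1)] = fun _ => (μy S) ^ 2 :=
    condExp_const (S.ℱ.le (s - 1)) _
  -- combine everything pointwise
  filter_upwards [e2, e3, t5, t7, t8, t9, t10, t11, t13, t14, u2, u3, u4] with ω
    he2 he3 ht5 ht7 ht8 ht9 ht10 ht11 ht13 ht14 hu2 hu3 hu4
  rw [t6] at ht5
  rw [u1] at he3
  rw [u5] at hu2
  simp only [Pi.add_apply, Pi.sub_apply, Pi.mul_apply, Pi.smul_apply, smul_eq_mul] at he2 he3 ht5 ht7 ht8 ht9 ht10 ht11 ht13 ht14 hu2 hu3 hu4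
  have ht12' : (S.μ[(fun ω => S.y s ω - S.f s ω (S.x s ω))|S.ℱ (s - 1)]) ω = (S.μ[S.y s - (fun ω => S.f s ω (S.x s ω))|S.ℱ (s - 1)]) ω := by rw [t12]
  have hcR : μy S * (S.μ[(fun ω => S.y s ω - S.f s ω (S.x s ω))|S.ℱ (s - 1)]) ω
      = μy S * μy S - μy S * (S.μ[(fun ω => S.f s ω (S.x s ω))|S.ℱ (s - 1)]) ω := by
    rw [ht12', ht13, ht14]
    ring
  have hcF2 : 2 * μy S * (S.μ[(fun ω => S.f s ω (S.x s ω))|S.ℱ (s - 1)]) ω = 2 * (μy S * (S.μ[(fun ω => S.f s ω (S.x s ω))|S.ℱ (s - 1)]) ω) := by ring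
  rw [one_div]
  linarith [he2, he3, ht5, ht7, ht8, ht9, ht10, ht11, hu2, hu3, hu4, hcR, hcF2]

/-- **Cumulative variance bound (Eq. (28) in the proof of Theorem 6).** Under the oracle
assumption with `c₀ c₁ ≥ 1` and `ℱ_{t−1}`-measurable query probabilities `p_t ∈ [β,τ]`, for
every `t`:
`Σ_{s=1}^t σ_s² ≤ c₀c₁ σ*²_{1:t} + c₀ Regret_t(p*_{1:t})` a.s., where
`Regret_t(p*_{1:t}) = Σ_{s=1}^t Φ_s(x_s)/p_s − Σ_{s=1}^t Φ_s(x_s)/p*_{1:t}`. -/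
theorem cumulative_variance_bound (S : ActiveQuerySetup Ω)
    (pstar : ℕ → Ω → ℝ) (hpstar : IsHindsightBest S pstar) :
    ∀ t, ∀ᵐ ω ∂S.μ,
      (∑ s ∈ Finset.Icc 1 t, condVar S s ω) ≤
        S.c₀ * S.c₁ * ∑ s ∈ Finset.Icc 1 t, sigmaStarSq S pstar s t ω
          + S.c₀ * ((∑ s ∈ Finset.Icc 1 t, S.Φ s ω / S.p s ω)
              - ∑ s ∈ Finset.Icc 1 t, S.Φ s ω / pstar t ω) := by
  intro t
  haveI := S.isProb
  have key : ∀ s ∈ Finset.Icc 1 t, ∀ᵐ ω ∂S.μ,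
      condVar S s ω ≤ S.c₀ * S.c₁ * sigmaStarSq S pstar s t ω
        + S.c₀ * (S.Φ s ω / S.p s ω - S.Φ s ω / pstar t ω) := by
    intro s _
    have hE0 : ∀ᵐ ω ∂S.μ, 0 ≤ (S.μ[(fun ω' => (S.y s ω' - S.f s ω' (S.x s ω')) ^ 2)|S.ℱ (s - 1)]) ω :=
      condExp_nonneg (ae_of_all _ fun ω => sq_nonneg _)
    filter_upwards [aux_condVar_eq S s, aux_V_nonneg S s, hE0, S.horacle_lo s, S.horacle_hi s]
      with ω h1 h2 h3 h4 h5
    have hpω := S.hpmem s ω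
    have hqω := (hpstar t ω).1
    have hp0 : 0 < S.p s ω := lt_of_lt_of_le S.hβ hpω.1
    have hq0 : 0 < pstar t ω := lt_of_lt_of_le S.hβ hqω.1
    have hp1 : S.p s ω ≤ 1 := hpω.2.trans S.hτ
    have hq1 : pstar t ω ≤ 1 := hqω.2.trans S.hτ
    have ha : 1 ≤ 1 / S.p s ω := by rw [le_div_iff₀ hp0]; linarith
    have hb : 1 ≤ 1 / pstar t ω := by rw [le_div_iff₀ hq0]; linarith
    have hΦE : S.Φ s ω ≤ S.c₁ * (S.μ[(fun ω' => (S.y s ω' - S.f s ω' (S.x s ω')) ^ 2)|S.ℱ (s - 1)]) ω := by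
      have e : S.c₁ * (1 / S.c₁ * S.Φ s ω) = S.Φ s ω := by
        field_simp
        exact mul_div_cancel_left₀ _ S.hc₁.ne'
      have h4' := mul_le_mul_of_nonneg_left h4 S.hc₁.le
      rw [e] at h4'
      exact h4'
    have hkey := real_key (c₀ := S.c₀) (c₁ := S.c₁)
      (X := (S.μ[(fun ω' => (S.f s ω' (S.x s ω')) ^ 2)|S.ℱ (s - 1)]) ω + 2 * (S.μ[(fun ω' => S.f s ω' (S.x s ω') * (S.y s ω' - S.f s ω' (S.x s ω')))|S.ℱ (s - 1)]) ω - (μy S) ^ 2)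
      (E := (S.μ[(fun ω' => (S.y s ω' - S.f s ω' (S.x s ω')) ^ 2)|S.ℱ (s - 1)]) ω) (Φ := S.Φ s ω) (a := 1 / S.p s ω) (b := 1 / pstar t ω)
      S.hc₀c₁ S.hc₀ (by linarith) hΦE h5 ha hb
    rw [h1]
    simp only [sigmaStarSq]
    rw [div_eq_mul_one_div (S.Φ s ω) (S.p s ω), div_eq_mul_one_div (S.Φ s ω) (pstar t ω)]
    linarith [hkey]
  have all := (ae_ball_iff (Finset.countable_toSet (Finset.Icc 1 t))).2 key
  filter_upwards [all] with ω hω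
  calc (∑ s ∈ Finset.Icc 1 t, condVar S s ω)
      ≤ ∑ s ∈ Finset.Icc 1 t, (S.c₀ * S.c₁ * sigmaStarSq S pstar s t ω
          + S.c₀ * (S.Φ s ω / S.p s ω - S.Φ s ω / pstar t ω)) := Finset.sum_le_sum hω
    _ = _ := by
        rw [Finset.sum_add_distrib, ← Finset.mul_sum, ← Finset.mul_sum,
          Finset.sum_sub_distrib]
end
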